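/- Assume b is negative definite on T^⊥, i.e. b(w, w) < 0 for every nonzero w ∈ T^⊥. Suppose g τ = λ τ for some λ ∈ ℂ with λ ≠ 1 (via the ℂ-linear extension of g). Then the only x ∈ S with g x = x is x = 0. (There are no trivial eigenvectors for the induced action of the cyclic group generated by g on S.) -/
import Mathlib


open scoped TensorProduct

/-- If `b` is negative definite on `T^⊥` and the `ℂ`-linear extension of the isometry `g`
satisfies `gτ = λτ` with `λ ≠ 1`, then the only element of `S` fixed by `g` is `0`:
there are no trivial eigenvectors for the induced action on `S`. -/
theorem stmt9 (V : Type*) [AddCommGroup V] [Module ℝ V] [FiniteDimensional ℝ V]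
    (b : LinearMap.BilinForm ℝ V) (hb : b.IsSymm)
    (g : V ≃ₗ[ℝ] V) (hg : ∀ x y : V, b (g x) (g y) = b x y)
    (L : AddSubgroup V) (hgL : (fun x => g x) '' (L : Set V) = (L : Set V))
    (X Y : V) (τ : ℂ ⊗[ℝ] V) (hτ : τ = (1 : ℂ) ⊗ₜ[ℝ] X + Complex.I ⊗ₜ[ℝ] Y)
    (Tperp S : Set V)
    (hT : Tperp = {x : V | x ∈ L ∧ b x X = 0 ∧ b x Y = 0})
    (hS : S = {x : V | x ∈ L ∧ ∀ w ∈ Tperp, b x w = 0})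
    (hnegdef : ∀ w ∈ Tperp, w ≠ 0 → b w w < 0)
    (lam : ℂ) (hlam : lam ≠ 1)
    (heig : LinearMap.baseChange ℂ (g : V →ₗ[ℝ] V) τ = lam • τ) :
    ∀ x ∈ S, g x = x → x = 0 := by
  intro x hx hfix
  subst hτ hT hS
  obtain ⟨hxL, hxperp⟩ := hx
  -- pairing with x, extended to ℂ ⊗ V
  let Φ : ℂ ⊗[ℝ] V →ₗ[ℝ] ℂ := TensorProduct.lift <|
    LinearMap.mk₂ ℝ (fun c v => (b x v) • c)
      (fun m₁ m₂ n => smul_add _ _ _)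
      (fun s m n => smul_comm _ _ _)
      (fun m n₁ n₂ => by simp [add_smul])
      (fun s m n => by simp [mul_smul])
  have h1 : b x (g X) = b x X := by
    rw [← hg x X, hfix]
  have h2 : b x (g Y) = b x Y := by
    rw [← hg x Y, hfix]
  have hΦ := congrArg Φ heig
  simp only [map_add, smul_add, LinearMap.baseChange_tmul, TensorProduct.smul_tmul',
    TensorProduct.lift.tmul, LinearMap.mk₂_apply, LinearEquiv.coe_coe, Φ] at hΦ
  rw [h1, h2] at hΦ
  have hz : (b x X : ℂ) + (b x Y : ℂ) * Complex.I = 0 := by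
    have h3 : ((b x X : ℂ) + (b x Y : ℂ) * Complex.I) * (1 - lam) = 0 := by
      simp only [Complex.real_smul, smul_eq_mul] at hΦ
      linear_combination hΦ
    rcases mul_eq_zero.mp h3 with h | h
    · exact h
    · exact absurd (by linear_combination -h) hlam
  have haX : b x X = 0 := by
    have := congrArg Complex.re hz
    simpa using this
  have haY : b x Y = 0 := by
    have := congrArg Complex.im hz
    simpa using this
  have hxT : x ∈ {x : V | x ∈ L ∧ b x X = 0 ∧ b x Y = 0} := ⟨hxL, haX, haY⟩
  have hxx : b x x = 0 := hxperp x hxT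
  by_contra hx0
  exact absurd hxx (ne_of_lt (hnegdef x hxT hx0))
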